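/- Let z1, z2 be linearly independent vectors in EuclideanSpace ℝ (Fin 2) and set z3 = -z1 - z2. Define the real 3×3 matrix M by M = ![![‖z1‖², 0, -⟪z1, z3⟫], ![-⟪z2, z1⟫, ‖z2‖², 0], ![0, -⟪z3, z2⟫, ‖z3‖²]], where ⟪·,·⟫ is the real inner product. Then every complex eigenvalue of M (i.e., every root in ℂ of the characteristic polynomial of M viewed as a complex matrix) has strictly positive real part; equivalently, the matrix Z = -M is Hurwitz. -/
import Mathlib

open scoped InnerProductSpace

lemma eval_charpoly_fin3' (N : Matrix (Fin 3) (Fin 3) ℂ) (μ : ℂ) :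
    N.charpoly.eval μ =
      (μ - N 0 0) * ((μ - N 1 1) * (μ - N 2 2) - (- N 1 2) * (- N 2 1))
      - (- N 0 1) * ((- N 1 0) * (μ - N 2 2) - (- N 1 2) * (- N 2 0))
      + (- N 0 2) * ((- N 1 0) * (- N 2 1) - (μ - N 1 1) * (- N 2 0)) := by
  rw [Matrix.charpoly, Matrix.det_fin_three]
  simp [Matrix.charmatrix_apply, Matrix.one_apply]
  ring

lemma cubic_pos_re' (s e d : ℝ) (hs : 0 < s) (he : 0 < e) (hd : 0 < d) (hsed : d < s * e)
    (μ : ℂ) (h : μ ^ 3 - (s : ℂ) * μ ^ 2 + (e : ℂ) * μ - (d : ℂ) = 0) : 0 < μ.re := by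
  set x := μ.re with hx
  set y := μ.im with hy
  have h' : μ * μ * μ - (s : ℂ) * (μ * μ) + (e : ℂ) * μ - (d : ℂ) = 0 := by
    linear_combination h
  have hre := congrArg Complex.re h'
  have him := congrArg Complex.im h'
  simp only [Complex.sub_re, Complex.add_re, Complex.mul_re, Complex.mul_im, Complex.sub_im,
    Complex.add_im, Complex.ofReal_re, Complex.ofReal_im, Complex.zero_re, Complex.zero_im,
    ← hx, ← hy] at hre him
  have him' : y * (3 * x ^ 2 - y ^ 2 - 2 * s * x + e) = 0 := by linear_combination him
  rcases mul_eq_zero.mp him' with hy0 | hyy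
  · by_contra hxle
    push_neg at hxle
    rw [hy0] at hre
    nlinarith [hre, mul_nonneg (neg_nonneg.2 hxle) (sq_nonneg x),
      mul_nonneg hs.le (sq_nonneg x), mul_nonpos_of_nonneg_of_nonpos he.le hxle]
  · have hid : s * e - d = 2 * x * ((2 * x - s) ^ 2 + e) := by
      linear_combination hre + (s - 3 * x) * hyy
    by_contra hxle
    push_neg at hxle
    nlinarith [sq_nonneg (2 * x - s),
      mul_nonpos_of_nonpos_of_nonneg hxle (by positivity : (0:ℝ) ≤ (2*x-s)^2 + e)]

lemma cs_strict' {x y : EuclideanSpace ℝ (Fin 2)} (h : LinearIndependent ℝ ![x, y]) :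
    ⟪x, y⟫_ℝ ^ 2 < ‖x‖ ^ 2 * ‖y‖ ^ 2 := by
  have key := LinearIndependent.pair_iff.mp h
  have hyne : y ≠ 0 := by rintro rfl; simpa using (key 0 1 (by simp)).2
  have h1 : ⟪x, y⟫_ℝ < ‖x‖ * ‖y‖ := by
    rw [inner_lt_norm_mul_iff_real]
    intro heq
    have h0 : ‖y‖ • x + (-‖x‖) • y = 0 := by
      rw [neg_smul, ← heq, add_neg_cancel]
    exact hyne (norm_eq_zero.mp (key _ _ h0).1)
  have h2 : ⟪-x, y⟫_ℝ < ‖-x‖ * ‖y‖ := by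
    rw [inner_lt_norm_mul_iff_real]
    intro heq
    rw [norm_neg] at heq
    have h0 : ‖y‖ • x + ‖x‖ • y = 0 := by
      rw [← heq, smul_neg, add_neg_cancel]
    exact hyne (norm_eq_zero.mp (key _ _ h0).1)
  rw [inner_neg_left, norm_neg] at h2
  nlinarith [h1, h2]

theorem stmt_0 (z1 z2 z3 : EuclideanSpace ℝ (Fin 2))
    (hind : LinearIndependent ℝ ![z1, z2])
    (hz3 : z3 = -z1 - z2)
    (M : Matrix (Fin 3) (Fin 3) ℝ)
    (hM : M = !![‖z1‖ ^ 2, 0, -⟪z1, z3⟫_ℝ;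
                 -⟪z2, z1⟫_ℝ, ‖z2‖ ^ 2, 0;
                 0, -⟪z3, z2⟫_ℝ, ‖z3‖ ^ 2]) :
    ∀ μ : ℂ, (Matrix.charpoly (M.map ((↑) : ℝ → ℂ))).IsRoot μ → 0 < μ.re := by
  intro μ hroot
  have hkey := LinearIndependent.pair_iff.mp hind
  have h21 : LinearIndependent ℝ ![z2, z1] := by
    rw [LinearIndependent.pair_iff]
    intro s t hst
    obtain ⟨ht, hs⟩ := hkey t s (by linear_combination (norm := module) hst)
    exact ⟨hs, ht⟩
  have h32 : LinearIndependent ℝ ![z3, z2] := by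
    rw [LinearIndependent.pair_iff]
    intro s t hst
    rw [hz3] at hst
    obtain ⟨h1, h2⟩ := hkey (-s) (t - s) (by linear_combination (norm := module) hst)
    constructor <;> linarith
  have h13 : LinearIndependent ℝ ![z1, z3] := by
    rw [LinearIndependent.pair_iff]
    intro s t hst
    rw [hz3] at hst
    obtain ⟨h1, h2⟩ := hkey (s - t) (-t) (by linear_combination (norm := module) hst)
    constructor <;> linarith
  set a := ‖z1‖ ^ 2 with ha'
  set b := ‖z2‖ ^ 2 with hb'
  set c := ‖z3‖ ^ 2 with hc'
  set p := ⟪z2, z1⟫_ℝ with hp'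
  set q := ⟪z3, z2⟫_ℝ with hq'
  set r := ⟪z1, z3⟫_ℝ with hr'
  have hz1 : z1 ≠ 0 := by
    rintro h0; simpa using (hkey 1 0 (by simp [h0])).1
  have hz2 : z2 ≠ 0 := by
    rintro h0; simpa using (hkey 0 1 (by simp [h0])).2
  have hz3ne : z3 ≠ 0 := by
    rintro h0
    obtain ⟨h1, h2⟩ := hkey 1 1 (by rw [one_smul, one_smul]; rw [hz3] at h0; linear_combination (norm := module) (-1 : ℝ) • h0)
    exact one_ne_zero h1
  have ha : 0 < a := pow_pos (norm_pos_iff.mpr hz1) 2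
  have hb : 0 < b := pow_pos (norm_pos_iff.mpr hz2) 2
  have hc : 0 < c := pow_pos (norm_pos_iff.mpr hz3ne) 2
  have hp : p ^ 2 < b * a := cs_strict' h21
  have hq : q ^ 2 < c * b := cs_strict' h32
  have hr : r ^ 2 < a * c := cs_strict' h13
  have hpqr : (p * q * r) ^ 2 < (a * b * c) ^ 2 := by
    have h1 : p ^ 2 * q ^ 2 < (b * a) * (c * b) :=
      mul_lt_mul'' hp hq (sq_nonneg p) (sq_nonneg q)
    have h2 : (p ^ 2 * q ^ 2) * r ^ 2 < ((b * a) * (c * b)) * (a * c) :=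
      mul_lt_mul'' h1 hr (by positivity) (sq_nonneg r)
    calc (p * q * r) ^ 2 = (p ^ 2 * q ^ 2) * r ^ 2 := by ring
      _ < ((b * a) * (c * b)) * (a * c) := h2
      _ = (a * b * c) ^ 2 := by ring
  have habc : 0 < a * b * c := by positivity
  have hlt : p * q * r < a * b * c := by nlinarith [hpqr, habc]
  have hgt : -(a * b * c) < p * q * r := by nlinarith [hpqr, habc]
  have hC : μ ^ 3 - ((a + b + c : ℝ) : ℂ) * μ ^ 2 + ((a * b + b * c + c * a : ℝ) : ℂ) * μ
      - ((a * b * c - p * q * r : ℝ) : ℂ) = 0 := by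
    rw [Polynomial.IsRoot, eval_charpoly_fin3'] at hroot
    simp only [hM, Matrix.map_apply, Matrix.cons_val', Matrix.cons_val_zero, Matrix.cons_val_one,
      Matrix.head_cons, Matrix.empty_val', Matrix.cons_val_fin_one, Matrix.head_fin_const,
      Matrix.cons_val_two, Matrix.tail_cons, Matrix.of_apply] at hroot
    push_cast at hroot ⊢
    linear_combination hroot
  exact cubic_pos_re' (a + b + c) (a * b + b * c + c * a) (a * b * c - p * q * r)
    (by positivity) (by positivity) (by linarith)
    (by nlinarith [hgt, mul_pos (mul_pos ha hb) hc, mul_pos (mul_pos ha ha) hb,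
      mul_pos (mul_pos ha ha) hc, mul_pos (mul_pos hb hb) ha, mul_pos (mul_pos hb hb) hc,
      mul_pos (mul_pos hc hc) ha, mul_pos (mul_pos hc hc) hb])
    μ hC
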